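/- Let m and n be finite types and A : Matrix m m ℝ, B : Matrix n n ℝ be positive semidefinite matrices. Then for every σ : ℝ with σ ≠ 0 and every vector y : m × n → ℝ, the linear system (Matrix.kroneckerMap (*) A B + σ² • 1).mulVec z = y has a unique solution z, and if A = U₁ * D₁ * U₁ᵀ and B = U₂ * D₂ * U₂ᵀ with U₁, U₂ orthogonal and D₁, D₂ diagonal with nonnegative entries, this solution is z = (Matrix.kroneckerMap (*) U₁ U₂).mulVec (w) where w (i,j) = ((D₁ i i) * (D₂ j j) + σ²)⁻¹ * ((Matrix.kroneckerMap (*) U₁ᵀ U₂ᵀ).mulVec y) (i,j). -/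

import Mathlib

open Matrix

section Key
variable {m n : Type*} [Fintype m] [Fintype n] [DecidableEq m] [DecidableEq n]

lemma kron_key (A : Matrix m m ℝ) (B : Matrix n n ℝ) (σ : ℝ) (hσ : σ ≠ 0)
    (y : m × n → ℝ)
    (U₁ D₁ : Matrix m m ℝ) (U₂ D₂ : Matrix n n ℝ)
    (h₁ : U₁ * U₁ᵀ = 1) (h₂ : U₂ * U₂ᵀ = 1)
    (hd₁ : D₁.IsDiag) (hd₂ : D₂.IsDiag)
    (hn₁ : ∀ i, 0 ≤ D₁ i i) (hn₂ : ∀ j, 0 ≤ D₂ j j)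
    (hA : A = U₁ * D₁ * U₁ᵀ) (hB : B = U₂ * D₂ * U₂ᵀ) :
    (Matrix.kroneckerMap (· * ·) A B + σ ^ 2 • 1).mulVec
      ((Matrix.kroneckerMap (· * ·) U₁ U₂).mulVec
        (fun p : m × n => (D₁ p.1 p.1 * D₂ p.2 p.2 + σ ^ 2)⁻¹ *
          (Matrix.kroneckerMap (· * ·) U₁ᵀ U₂ᵀ).mulVec y p)) = y := by
  have hσ2 : 0 < σ ^ 2 := by positivity
  set d : m × n → ℝ := fun p => D₁ p.1 p.1 * D₂ p.2 p.2 + σ ^ 2 with hd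
  have hdpos : ∀ p, 0 < d p := fun p => by
    have := mul_nonneg (hn₁ p.1) (hn₂ p.2); simp only [hd]; linarith
  have h₁' : U₁ᵀ * U₁ = 1 := mul_eq_one_comm.mp h₁
  have h₂' : U₂ᵀ * U₂ = 1 := mul_eq_one_comm.mp h₂
  set U := Matrix.kroneckerMap (· * ·) U₁ U₂
  set V := Matrix.kroneckerMap (· * ·) U₁ᵀ U₂ᵀ
  have hVU : V * U = 1 := by
    rw [show V * U = Matrix.kroneckerMap (· * ·) (U₁ᵀ * U₁) (U₂ᵀ * U₂) from
      (mul_kronecker_mul _ _ _ _).symm, h₁', h₂', one_kronecker_one]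
  have hUV : U * V = 1 := mul_eq_one_comm.mp hVU
  have hDdiag : Matrix.kroneckerMap (· * ·) D₁ D₂ + σ ^ 2 • 1 =
      diagonal d := by
    rw [← hd₁.diagonal_diag, ← hd₂.diagonal_diag, diagonal_kronecker_diagonal,
      ← diagonal_one, ← diagonal_smul, diagonal_add]
    congr 1
    funext p
    simp [hd, diag]
  have hAB : Matrix.kroneckerMap (· * ·) A B =
      U * Matrix.kroneckerMap (· * ·) D₁ D₂ * V := by
    rw [hA, hB, ← mul_kronecker_mul, ← mul_kronecker_mul]
  have hw : (fun p : m × n => (d p)⁻¹ * V.mulVec y p) =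
      (diagonal fun p => (d p)⁻¹).mulVec (V.mulVec y) := by
    funext p; simp [mulVec_diagonal]
  have hM : Matrix.kroneckerMap (· * ·) A B + σ ^ 2 • 1 = U * diagonal d * V := by
    rw [hAB]
    have : (σ ^ 2 • 1 : Matrix (m × n) (m × n) ℝ) = U * (σ ^ 2 • 1) * V := by
      rw [mul_smul_comm, mul_one, smul_mul_assoc, hUV]
    rw [this, ← hDdiag, Matrix.mul_add, Matrix.add_mul]
  rw [hw, hM]
  simp only [mulVec_mulVec]
  have hdd : diagonal d * diagonal (fun p => (d p)⁻¹) = 1 := by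
    rw [diagonal_mul_diagonal]
    rw [show (fun p => d p * (d p)⁻¹) = fun _ => (1:ℝ) from
      funext fun p => mul_inv_cancel₀ (hdpos p).ne', diagonal_one]
  have key : U * diagonal d * V * (U * diagonal (fun p => (d p)⁻¹) * V) = 1 := by
    simp only [Matrix.mul_assoc]
    rw [← Matrix.mul_assoc V U, hVU, Matrix.one_mul,
      ← Matrix.mul_assoc (diagonal d), hdd, Matrix.one_mul, hUV]
  rw [← Matrix.mul_assoc U (diagonal fun p => (d p)⁻¹) V, key, one_mulVec]

end Key

/-- Closed-form solution of the Kronecker-structured noisy linear system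
`(A ⊗ₖ B + σ² • 1) z = y`: the system has a unique solution, and if `A = U₁ D₁ U₁ᵀ`
and `B = U₂ D₂ U₂ᵀ` with `U₁, U₂` orthogonal and `D₁, D₂` diagonal with nonnegative
entries, the solution is
`z = (U₁ ⊗ₖ U₂) w` with `w (i,j) = (D₁ i i * D₂ j j + σ²)⁻¹ * ((U₁ᵀ ⊗ₖ U₂ᵀ) y) (i,j)`. -/
theorem kronecker_noisy_system_solution {m n : Type*} [Fintype m] [Fintype n]
    [DecidableEq m] [DecidableEq n]
    (A : Matrix m m ℝ) (B : Matrix n n ℝ)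
    (hA : A.PosSemidef) (hB : B.PosSemidef)
    (σ : ℝ) (hσ : σ ≠ 0) (y : m × n → ℝ) :
    (∃! z : m × n → ℝ,
        (Matrix.kroneckerMap (· * ·) A B + σ ^ 2 • 1).mulVec z = y) ∧
      ∀ (U₁ D₁ : Matrix m m ℝ) (U₂ D₂ : Matrix n n ℝ),
        U₁ * U₁ᵀ = 1 → U₂ * U₂ᵀ = 1 →
        D₁.IsDiag → D₂.IsDiag →
        (∀ i, 0 ≤ D₁ i i) → (∀ j, 0 ≤ D₂ j j) →
        A = U₁ * D₁ * U₁ᵀ → B = U₂ * D₂ * U₂ᵀ →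
        (Matrix.kroneckerMap (· * ·) A B + σ ^ 2 • 1).mulVec
          ((Matrix.kroneckerMap (· * ·) U₁ U₂).mulVec
            (fun p : m × n => (D₁ p.1 p.1 * D₂ p.2 p.2 + σ ^ 2)⁻¹ *
              (Matrix.kroneckerMap (· * ·) U₁ᵀ U₂ᵀ).mulVec y p)) = y := by
  set U₁ : Matrix m m ℝ := (hA.1.eigenvectorUnitary : Matrix m m ℝ)
  set U₂ : Matrix n n ℝ := (hB.1.eigenvectorUnitary : Matrix n n ℝ)
  set D₁ : Matrix m m ℝ := diagonal hA.1.eigenvalues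
  set D₂ : Matrix n n ℝ := diagonal hB.1.eigenvalues
  have hU₁ : U₁ * U₁ᵀ = 1 := by
    have := (Matrix.mem_unitaryGroup_iff.mp hA.1.eigenvectorUnitary.2)
    rwa [star_eq_conjTranspose, conjTranspose_eq_transpose_of_trivial] at this
  have hU₂ : U₂ * U₂ᵀ = 1 := by
    have := (Matrix.mem_unitaryGroup_iff.mp hB.1.eigenvectorUnitary.2)
    rwa [star_eq_conjTranspose, conjTranspose_eq_transpose_of_trivial] at this
  have hA' : A = U₁ * D₁ * U₁ᵀ := by
    have := hA.1.spectral_theorem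
    rwa [Unitary.conjStarAlgAut_apply, star_eq_conjTranspose, conjTranspose_eq_transpose_of_trivial,
      RCLike.ofReal_real_eq_id, Function.id_comp] at this
  have hB' : B = U₂ * D₂ * U₂ᵀ := by
    have := hB.1.spectral_theorem
    rwa [Unitary.conjStarAlgAut_apply, star_eq_conjTranspose, conjTranspose_eq_transpose_of_trivial,
      RCLike.ofReal_real_eq_id, Function.id_comp] at this
  have hn₁ : ∀ i, 0 ≤ D₁ i i := fun i => by
    simpa [D₁] using hA.eigenvalues_nonneg i
  have hn₂ : ∀ j, 0 ≤ D₂ j j := fun j => by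
    simpa [D₂] using hB.eigenvalues_nonneg j
  have hd₁ : D₁.IsDiag := isDiag_diagonal _
  have hd₂ : D₂.IsDiag := isDiag_diagonal _
  have hsols := fun (y' : m × n → ℝ) =>
    kron_key A B σ hσ y' U₁ D₁ U₂ D₂ hU₁ hU₂ hd₁ hd₂ hn₁ hn₂ hA' hB'
  have hsurj : Function.Surjective
      (Matrix.kroneckerMap (· * ·) A B + σ ^ 2 • 1).mulVec :=
    fun y' => ⟨_, hsols y'⟩
  have hunit := Matrix.mulVec_surjective_iff_isUnit.mp hsurj
  have hinj := Matrix.mulVec_injective_iff_isUnit.mpr hunit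
  refine ⟨⟨_, hsols y, fun z hz => hinj (hz.trans (hsols y).symm)⟩, ?_⟩
  intro V₁ E₁ V₂ E₂ h1 h2 h3 h4 h5 h6 h7 h8
  exact kron_key A B σ hσ y V₁ E₁ V₂ E₂ h1 h2 h3 h4 h5 h6 h7 h8
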